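/- When there are at most two distinct valuation types among the agents and m is a multiple of n, there exists a balanced allocation that is both EF1 and fractionally Pareto optimal. -/

import Mathlib

open Finset

def IsBalanced (n m k : ℕ) (A : Fin n → Finset (Fin m)) : Prop :=
  (∀ j : Fin m, ∃! i : Fin n, j ∈ A i) ∧ ∀ i : Fin n, (A i).card = k

def IsFracBalanced (n m k : ℕ) (x : Fin n → Fin m → ℝ) : Prop :=
  (∀ i j, 0 ≤ x i j) ∧ (∀ i : Fin n, ∑ j : Fin m, x i j = (k : ℝ)) ∧
    (∀ j : Fin m, ∑ i : Fin n, x i j = 1)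

def IsFPO (n m k : ℕ) (v : Fin n → Fin m → ℝ) (A : Fin n → Finset (Fin m)) : Prop :=
  ¬ ∃ x : Fin n → Fin m → ℝ, IsFracBalanced n m k x ∧
    (∀ i : Fin n, ∑ j ∈ A i, v i j ≤ ∑ j : Fin m, v i j * x i j) ∧
    (∃ i : Fin n, ∑ j ∈ A i, v i j < ∑ j : Fin m, v i j * x i j)

def IsEF1 (n m : ℕ) (v : Fin n → Fin m → ℝ) (A : Fin n → Finset (Fin m)) : Prop :=
  ∀ i i' : Fin n, A i' = ∅ ∨
    ∃ j ∈ A i', ∑ j' ∈ (A i').erase j, v i j' ≤ ∑ j' ∈ A i, v i j'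

namespace Stmt19

variable {m : ℕ}

noncomputable def srt (w : Fin m → ℝ) (S : Finset (Fin m)) : List (Fin m) :=
  S.toList.mergeSort (fun x y => decide (w y ≤ w x))

lemma srt_perm (w : Fin m → ℝ) (S : Finset (Fin m)) : (srt w S).Perm S.toList :=
  List.mergeSort_perm _ _

lemma mem_srt {w : Fin m → ℝ} {S : Finset (Fin m)} {x : Fin m} :
    x ∈ srt w S ↔ x ∈ S := by
  rw [(srt_perm w S).mem_iff, Finset.mem_toList]

lemma srt_nodup (w : Fin m → ℝ) (S : Finset (Fin m)) : (srt w S).Nodup :=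
  (srt_perm w S).nodup_iff.mpr S.nodup_toList

lemma srt_length (w : Fin m → ℝ) (S : Finset (Fin m)) : (srt w S).length = S.card := by
  rw [(srt_perm w S).length_eq, Finset.length_toList]

lemma srt_sorted (w : Fin m → ℝ) (S : Finset (Fin m)) :
    (srt w S).Pairwise (fun x y => w y ≤ w x) := by
  have h := List.pairwise_mergeSort (le := fun x y : Fin m => decide (w y ≤ w x))
    (fun a b c hab hbc => by
      simp only [decide_eq_true_eq] at *; exact le_trans hbc hab)
    (fun a b => by
      simp only [Bool.or_eq_true, decide_eq_true_eq]; exact le_total (w b) (w a))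
    S.toList
  exact h.imp (by simp)

lemma srt_sorted_get (w : Fin m → ℝ) (S : Finset (Fin m)) {i j : ℕ}
    (hij : i < j) (hj : j < (srt w S).length) :
    w ((srt w S)[j]) ≤ w ((srt w S)[i]) :=
  List.pairwise_iff_getElem.1 (srt_sorted w S) i j (lt_trans hij hj) hj hij

noncomputable def gd (d : Fin m) (w : Fin m → ℝ) (S : Finset (Fin m)) (i : ℕ) : Fin m :=
  (srt w S).getD i d

noncomputable def sv (w : Fin m → ℝ) (S : Finset (Fin m)) (i : ℕ) : ℝ :=
  ((srt w S).map w).getD i 0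

lemma gd_eq (d : Fin m) (w : Fin m → ℝ) (S : Finset (Fin m)) {i : ℕ}
    (h : i < (srt w S).length) : gd d w S i = (srt w S)[i] := by
  rw [gd, List.getD_eq_getElem?_getD, List.getElem?_eq_getElem h]; rfl

lemma sv_eq (d : Fin m) (w : Fin m → ℝ) (S : Finset (Fin m)) {i : ℕ}
    (h : i < (srt w S).length) : sv w S i = w (gd d w S i) := by
  rw [sv, List.getD_eq_getElem?_getD, List.getElem?_eq_getElem (by simpa using h)]
  rw [gd_eq d w S h]; simp

lemma sv_eq_zero (w : Fin m → ℝ) (S : Finset (Fin m)) {i : ℕ}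
    (h : (srt w S).length ≤ i) : sv w S i = 0 := by
  rw [sv, List.getD_eq_getElem?_getD, List.getElem?_eq_none (by simpa using h)]; rfl

lemma sv_nonneg (w : Fin m → ℝ) (hw : ∀ j, 0 ≤ w j) (S : Finset (Fin m)) (i : ℕ) :
    0 ≤ sv w S i := by
  rcases lt_or_ge i (srt w S).length with h | h
  · rw [sv_eq ((srt w S)[i]) w S h]; exact hw _
  · rw [sv_eq_zero w S h]

lemma sv_anti (w : Fin m → ℝ) (hw : ∀ j, 0 ≤ w j) (S : Finset (Fin m)) {i j : ℕ}
    (hij : i ≤ j) : sv w S j ≤ sv w S i := by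
  rcases lt_or_ge j (srt w S).length with h | h
  · have hi : i < (srt w S).length := lt_of_le_of_lt hij h
    set d := (srt w S)[j]
    rw [sv_eq d w S h, sv_eq d w S hi, gd_eq d w S h, gd_eq d w S hi]
    rcases eq_or_lt_of_le hij with rfl | hlt
    · exact le_refl _
    · exact srt_sorted_get w S hlt h
  · rw [sv_eq_zero w S h]; exact sv_nonneg w hw S i

lemma gd_mem (d : Fin m) (w : Fin m → ℝ) (S : Finset (Fin m)) {i : ℕ}
    (h : i < (srt w S).length) : gd d w S i ∈ S := by
  rw [gd_eq d w S h]; exact mem_srt.1 (List.getElem_mem _)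

lemma gd_inj (d : Fin m) (w : Fin m → ℝ) (S : Finset (Fin m)) {i j : ℕ}
    (hi : i < (srt w S).length) (hj : j < (srt w S).length)
    (hij : gd d w S i = gd d w S j) : i = j := by
  rw [gd_eq d w S hi, gd_eq d w S hj] at hij
  exact (List.Nodup.getElem_inj_iff (srt_nodup w S)).1 hij

lemma filter_card_of_sv (w : Fin m → ℝ) (S : Finset (Fin m)) {t : ℝ} {i : ℕ}
    (hi : i < S.card) (h : t ≤ sv w S i) :
    i + 1 ≤ (S.filter (fun z => t ≤ w z)).card := by
  have hlen : i < (srt w S).length := by rwa [srt_length]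
  set d := (srt w S)[i] with hd
  have hsub : (Finset.range (i+1)).image (fun j => gd d w S j) ⊆
      S.filter (fun z => t ≤ w z) := by
    intro z hz
    rcases Finset.mem_image.1 hz with ⟨j, hj, rfl⟩
    have hj' : j ≤ i := Nat.lt_succ_iff.1 (Finset.mem_range.1 hj)
    have hjlen : j < (srt w S).length := lt_of_le_of_lt hj' hlen
    refine Finset.mem_filter.2 ⟨gd_mem d w S hjlen, ?_⟩
    have h2 : sv w S i ≤ sv w S j := by
      rw [sv_eq d w S hlen, sv_eq d w S hjlen, gd_eq d w S hlen, gd_eq d w S hjlen]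
      rcases eq_or_lt_of_le hj' with rfl | hlt
      · exact le_refl _
      · exact srt_sorted_get w S hlt hlen
    have h3 : sv w S j = w (gd d w S j) := sv_eq d w S hjlen
    linarith
  have hcard := Finset.card_le_card hsub
  rwa [Finset.card_image_of_injOn, Finset.card_range] at hcard
  intro x hx y hy hxy
  simp only [Finset.coe_range, Set.mem_Iio] at hx hy
  exact gd_inj d w S (by omega) (by omega) hxy

lemma sv_of_filter_card (w : Fin m → ℝ) (S : Finset (Fin m)) {t : ℝ} {i : ℕ}
    (h : i + 1 ≤ (S.filter (fun z => t ≤ w z)).card) : t ≤ sv w S i := by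
  have hi : i < S.card := lt_of_lt_of_le (Nat.lt_succ_self i |>.trans_le h)
    (Finset.card_le_card (Finset.filter_subset _ _))
  have hlen : i < (srt w S).length := by rwa [srt_length]
  set d := (srt w S)[i] with hd
  by_contra hc
  push_neg at hc
  -- every element with value ≥ t appears at a position < i
  have hsub : S.filter (fun z => t ≤ w z) ⊆ (Finset.range i).image (fun j => gd d w S j) := by
    intro z hz
    rcases Finset.mem_filter.1 hz with ⟨hzS, hzt⟩
    have hzmem : z ∈ srt w S := mem_srt.2 hzS
    rcases List.mem_iff_getElem.1 hzmem with ⟨j, hjlen, rfl⟩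
    refine Finset.mem_image.2 ⟨j, Finset.mem_range.2 ?_, gd_eq d w S hjlen⟩
    by_contra hji
    push_neg at hji
    have : w ((srt w S)[j]) ≤ sv w S i := by
      rw [sv_eq d w S hlen, gd_eq d w S hlen]
      rcases eq_or_lt_of_le hji with h' | hlt
      · subst h'; exact le_refl _
      · exact srt_sorted_get w S hlt hjlen
    linarith
  have := Finset.card_le_card hsub
  have h2 : ((Finset.range i).image (fun j => gd d w S j)).card ≤ i := by
    calc _ ≤ (Finset.range i).card := Finset.card_image_le
      _ = i := Finset.card_range i
  omega

lemma sv_insert_erase_ge (w : Fin m → ℝ) (hw : ∀ j, 0 ≤ w j) (S : Finset (Fin m))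
    {x y : Fin m} (hx : x ∈ S) (hy : y ∉ S) (i : ℕ) :
    sv w S (i+1) ≤ sv w (insert y (S.erase x)) i := by
  set S' := insert y (S.erase x) with hS'
  have hycard : S'.card = S.card := by
    rw [hS', Finset.card_insert_of_notMem (fun hc => hy (Finset.mem_of_mem_erase hc)),
      Finset.card_erase_of_mem hx]
    have : 1 ≤ S.card := Finset.card_pos.2 ⟨x, hx⟩
    omega
  rcases lt_or_ge (i+1) S.card with h | h
  · have ht := filter_card_of_sv w S h (le_refl (sv w S (i+1)))
    set t := sv w S (i+1)
    apply sv_of_filter_card w S'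
    have hsub : (S.filter (fun z => t ≤ w z)).erase x ⊆ S'.filter (fun z => t ≤ w z) := by
      intro z hz
      rcases Finset.mem_erase.1 hz with ⟨hzx, hz2⟩
      rcases Finset.mem_filter.1 hz2 with ⟨hzS, hzt⟩
      exact Finset.mem_filter.2 ⟨Finset.mem_insert_of_mem (Finset.mem_erase.2 ⟨hzx, hzS⟩), hzt⟩
    have h1 : (S.filter (fun z => t ≤ w z)).card - 1 ≤
        ((S.filter (fun z => t ≤ w z)).erase x).card := Finset.pred_card_le_card_erase
    have h2 := Finset.card_le_card hsub
    omega
  · rw [sv_eq_zero w S (by rw [srt_length]; omega)]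
    exact sv_nonneg w hw S' i

lemma sv_insert_erase_le (w : Fin m → ℝ) (hw : ∀ j, 0 ≤ w j) (S : Finset (Fin m))
    {x y : Fin m} (hx : x ∈ S) (hy : y ∉ S) (i : ℕ) :
    sv w (insert y (S.erase x)) (i+1) ≤ sv w S i := by
  set S' := insert y (S.erase x) with hS'
  have hxy : x ≠ y := fun h => hy (h ▸ hx)
  have hyS' : y ∈ S' := Finset.mem_insert_self _ _
  have hxS' : x ∉ S' := by
    rw [hS']
    intro hc
    rcases Finset.mem_insert.1 hc with h | h
    · exact hxy h
    · exact (Finset.mem_erase.1 h).1 rfl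
  have hSS' : S = insert x (S'.erase y) := by
    rw [hS', Finset.erase_insert (fun hc => hy (Finset.mem_of_mem_erase hc)),
      Finset.insert_erase hx]
  calc sv w S' (i+1) ≤ sv w (insert x (S'.erase y)) i :=
        sv_insert_erase_ge w hw S' hyS' hxS' i
    _ = sv w S i := by rw [← hSS']

noncomputable def bnd (d : Fin m) (w : Fin m → ℝ) (S : Finset (Fin m)) (s k a : ℕ) :
    Finset (Fin m) := (Finset.range k).image (fun c => gd d w S (a + c * s))

section bundles

variable (d : Fin m) (w : Fin m → ℝ) (S : Finset (Fin m)) {s k : ℕ}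
variable (hcard : S.card = s * k) (hs : 0 < s)

lemma idx_lt {a c : ℕ} (ha : a < s) (hc : c < k) : a + c * s < s * k := by
  have h1 : a + c * s < (c+1) * s := by
    have : (c+1) * s = c * s + s := by ring
    omega
  have h2 : (c+1) * s ≤ k * s := Nat.mul_le_mul_right s hc
  have : k * s = s * k := Nat.mul_comm k s
  omega

include hcard in
lemma idx_len {a c : ℕ} (ha : a < s) (hc : c < k) :
    a + c * s < (srt w S).length := by
  rw [srt_length, hcard]; exact idx_lt ha hc

include hcard in
lemma bnd_inj {a : ℕ} (ha : a < s) :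
    Set.InjOn (fun c => gd d w S (a + c * s)) (Finset.range k) := by
  intro c hc c' hc' hcc
  simp only [Finset.coe_range, Set.mem_Iio] at hc hc'
  have := gd_inj d w S (idx_len w S hcard ha hc) (idx_len w S hcard ha hc') hcc
  have hs0 : 0 < s := by
    rcases Nat.eq_zero_or_pos s with rfl | h
    · omega
    · exact h
  exact Nat.eq_of_mul_eq_mul_right hs0 (by omega)

include hcard in
lemma bnd_card {a : ℕ} (ha : a < s) : (bnd d w S s k a).card = k := by
  rw [bnd, Finset.card_image_of_injOn (bnd_inj d w S hcard ha), Finset.card_range]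

include hcard in
lemma bnd_subset {a : ℕ} (ha : a < s) : bnd d w S s k a ⊆ S := by
  intro z hz
  rcases Finset.mem_image.1 hz with ⟨c, hc, rfl⟩
  exact gd_mem d w S (idx_len w S hcard ha (Finset.mem_range.1 hc))

include hcard in
lemma sum_bnd {a : ℕ} (ha : a < s) (f : Fin m → ℝ) :
    ∑ z ∈ bnd d w S s k a, f z = ∑ c ∈ Finset.range k, f (gd d w S (a + c * s)) := by
  rw [bnd, Finset.sum_image]
  intro c hc c' hc' h
  exact bnd_inj d w S hcard ha hc hc' h

include hcard hs in
lemma bnd_exists {z : Fin m} (hz : z ∈ S) : ∃ a, a < s ∧ z ∈ bnd d w S s k a := by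
  rcases List.mem_iff_getElem.1 ((mem_srt (w := w)).2 hz) with ⟨i, hilen, hzi⟩
  have hik : i < s * k := by rwa [srt_length, hcard] at hilen
  refine ⟨i % s, Nat.mod_lt i hs, ?_⟩
  refine Finset.mem_image.2 ⟨i / s, Finset.mem_range.2 ?_, ?_⟩
  · exact Nat.div_lt_of_lt_mul (by omega)
  · have hidx : i % s + i / s * s = i := by rw [Nat.mul_comm]; exact Nat.mod_add_div i s
    rw [hidx, gd_eq d w S hilen, hzi]

include hcard in
lemma bnd_unique {z : Fin m} {a a' : ℕ} (ha : a < s) (ha' : a' < s)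
    (h1 : z ∈ bnd d w S s k a) (h2 : z ∈ bnd d w S s k a') : a = a' := by
  rcases Finset.mem_image.1 h1 with ⟨c, hc, rfl⟩
  rcases Finset.mem_image.1 h2 with ⟨c', hc', he⟩
  have := gd_inj d w S (idx_len w S hcard ha' (Finset.mem_range.1 hc'))
    (idx_len w S hcard ha (Finset.mem_range.1 hc)) he
  -- a' + c' * s = a + c * s with a, a' < s → a = a'
  have h3 : (a' + c' * s) % s = (a + c * s) % s := by rw [this]
  rw [Nat.add_mul_mod_self_right, Nat.add_mul_mod_self_right,
    Nat.mod_eq_of_lt ha', Nat.mod_eq_of_lt ha] at h3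
  omega


lemma gd_mem_bnd {a : ℕ} (hk : 0 < k) : gd d w S a ∈ bnd d w S s k a :=
  Finset.mem_image.2 ⟨0, Finset.mem_range.2 hk, by simp⟩

include hcard in
lemma sum_bnd_erase {a : ℕ} (ha : a < s) (hk : 0 < k) (f : Fin m → ℝ) :
    ∑ z ∈ (bnd d w S s k a).erase (gd d w S a), f z
      = ∑ c ∈ Finset.Ico 1 k, f (gd d w S (a + c * s)) := by
  have hmem := gd_mem_bnd d w S (s := s) (k := k) (a := a) hk
  have h1 : ∑ z ∈ (bnd d w S s k a).erase (gd d w S a), f z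
      = (∑ z ∈ bnd d w S s k a, f z) - f (gd d w S a) := by
    rw [Finset.sum_erase_eq_sub hmem]
  rw [h1, sum_bnd d w S hcard ha f, Finset.range_eq_Ico,
    Finset.sum_eq_sum_Ico_succ_bot hk]
  simp only [Nat.zero_add, Nat.zero_mul, Nat.add_zero]
  ring

end bundles

/-! ### Split-level definitions -/

noncomputable def alph (w : Fin m → ℝ) (S : Finset (Fin m)) (s k : ℕ) : ℝ :=
  ∑ c ∈ Finset.range k, sv w S (c * s + (s - 1))

noncomputable def gam (w : Fin m → ℝ) (S : Finset (Fin m)) (s k : ℕ) : ℝ :=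
  ∑ c ∈ Finset.Ico 1 k, sv w S (c * s)

/-- validity of a split w.r.t. weight ratio `r` and threshold `θ` -/
def Valid (av bv : Fin m → ℝ) (P : Finset (Fin m)) (r θ : ℝ) : Prop :=
  (∀ p ∈ P, θ ≤ av p - r * bv p) ∧ (∀ q ∈ Pᶜ, av q - r * bv q ≤ θ)

/-- type-0 agents do not envy type-1 bundles beyond one good -/
def E0cross (d : Fin m) (av bv : Fin m → ℝ) (n1 n2 k : ℕ) (P : Finset (Fin m)) : Prop :=
  ∀ a0 < n1, ∀ b0 < n2, ∃ j ∈ bnd d bv Pᶜ n2 k b0,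
    ∑ z ∈ (bnd d bv Pᶜ n2 k b0).erase j, av z ≤ ∑ z ∈ bnd d av P n1 k a0, av z

/-- type-1 agents do not envy type-0 bundles beyond one good -/
def E1cross (d : Fin m) (av bv : Fin m → ℝ) (n1 n2 k : ℕ) (P : Finset (Fin m)) : Prop :=
  ∀ b0 < n2, ∀ a0 < n1, ∃ j ∈ bnd d av P n1 k a0,
    ∑ z ∈ (bnd d av P n1 k a0).erase j, bv z ≤ ∑ z ∈ bnd d bv Pᶜ n2 k b0, bv z

lemma gam_le_alph (w : Fin m → ℝ) (hw : ∀ j, 0 ≤ w j) (S : Finset (Fin m)) (s k : ℕ) :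
    gam w S s k ≤ alph w S s k := by
  rw [gam, alph, Finset.sum_Ico_eq_sum_range]
  have h1 : ∑ i ∈ Finset.range (k - 1), sv w S ((1 + i) * s)
      ≤ ∑ i ∈ Finset.range (k - 1), sv w S (i * s + (s - 1)) := by
    apply Finset.sum_le_sum
    intro i _
    apply sv_anti w hw S
    have : (1 + i) * s = i * s + s := by ring
    omega
  have h2 : ∑ i ∈ Finset.range (k - 1), sv w S (i * s + (s - 1))
      ≤ ∑ i ∈ Finset.range k, sv w S (i * s + (s - 1)) := by
    apply Finset.sum_le_sum_of_subset_of_nonneg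
    · apply Finset.range_subset_range.2; omega
    · intro i _ _; exact sv_nonneg w hw S _
  exact le_trans h1 h2

lemma alph_le_bnd (d : Fin m) (w : Fin m → ℝ) (hw : ∀ j, 0 ≤ w j) (S : Finset (Fin m))
    {s k a : ℕ} (hcard : S.card = s * k) (ha : a < s) :
    alph w S s k ≤ ∑ z ∈ bnd d w S s k a, w z := by
  rw [sum_bnd d w S hcard ha w, alph]
  apply Finset.sum_le_sum
  intro c hc
  have hlen : a + c * s < (srt w S).length :=
    idx_len w S hcard ha (Finset.mem_range.1 hc)
  have h1 : sv w S (c * s + (s-1)) ≤ sv w S (a + c * s) := sv_anti w hw S (by omega)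
  have h2 := sv_eq d w S hlen
  linarith

lemma bnd_erase_le_gam (d : Fin m) (w : Fin m → ℝ) (hw : ∀ j, 0 ≤ w j) (S : Finset (Fin m))
    {s k a : ℕ} (hcard : S.card = s * k) (ha : a < s) :
    ∑ c ∈ Finset.Ico 1 k, sv w S (a + c * s) ≤ gam w S s k := by
  rw [gam]
  apply Finset.sum_le_sum
  intro c _
  exact sv_anti w hw S (by omega)

lemma swap_ge (w : Fin m → ℝ) (hw : ∀ j, 0 ≤ w j) (S : Finset (Fin m)) {x y : Fin m}
    (hx : x ∈ S) (hy : y ∉ S) (s k : ℕ) (hs : 0 < s) :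
    gam w S s k ≤ alph w (insert y (S.erase x)) s k := by
  rw [gam, alph, Finset.sum_Ico_eq_sum_range]
  have h1 : ∑ i ∈ Finset.range (k - 1), sv w S ((1 + i) * s)
      ≤ ∑ i ∈ Finset.range (k - 1), sv w (insert y (S.erase x)) (i * s + (s - 1)) := by
    apply Finset.sum_le_sum
    intro i _
    have heq : (1 + i) * s = (i * s + (s - 1)) + 1 := by
      have : (1 + i) * s = i * s + s := by ring
      omega
    rw [heq]
    exact sv_insert_erase_ge w hw S hx hy _
  have h2 : ∑ i ∈ Finset.range (k - 1), sv w (insert y (S.erase x)) (i * s + (s - 1))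
      ≤ ∑ i ∈ Finset.range k, sv w (insert y (S.erase x)) (i * s + (s - 1)) := by
    apply Finset.sum_le_sum_of_subset_of_nonneg
    · apply Finset.range_subset_range.2; omega
    · intro i _ _; exact sv_nonneg w hw _ _
  exact le_trans h1 h2

lemma insert_erase_invol (S : Finset (Fin m)) {x y : Fin m} (hx : x ∈ S) (hy : y ∉ S) :
    insert x ((insert y (S.erase x)).erase y) = S := by
  rw [Finset.erase_insert (fun hc => hy (Finset.mem_of_mem_erase hc)),
    Finset.insert_erase hx]

lemma swap_le (w : Fin m → ℝ) (hw : ∀ j, 0 ≤ w j) (S : Finset (Fin m)) {x y : Fin m}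
    (hx : x ∈ S) (hy : y ∉ S) (s k : ℕ) (hs : 0 < s) :
    gam w (insert y (S.erase x)) s k ≤ alph w S s k := by
  set S' := insert y (S.erase x) with hS'
  have hyS' : y ∈ S' := Finset.mem_insert_self _ _
  have hxS' : x ∉ S' := by
    intro hc
    rcases Finset.mem_insert.1 hc with h | h
    · exact hy (h ▸ hx)
    · exact (Finset.mem_erase.1 h).1 rfl
  have := swap_ge w hw S' hyS' hxS' s k hs
  rwa [insert_erase_invol S hx hy] at this

section suff

variable (d : Fin m) (av bv : Fin m → ℝ) {n1 n2 k : ℕ} {P : Finset (Fin m)}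

lemma E0_of_suff (ha : ∀ j, 0 ≤ av j) (hb : ∀ j, 0 ≤ bv j)
    (hP : P.card = n1 * k) (hQ : (Pᶜ : Finset (Fin m)).card = n2 * k)
    (hn1 : 0 < n1) (hn2 : 0 < n2) (hk : 0 < k)
    {r θ : ℝ} (hr : 0 < r) (hV : Valid av bv P r θ)
    (hsuff : r * gam bv Pᶜ n2 k + ((k : ℝ) - 1) * θ ≤ alph av P n1 k) :
    E0cross d av bv n1 n2 k P := by
  intro a0 ha0 b0 hb0
  refine ⟨gd d bv Pᶜ b0, gd_mem_bnd d bv Pᶜ hk, ?_⟩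
  rw [sum_bnd_erase d bv Pᶜ hQ hb0 hk av]
  have key : ∀ c ∈ Finset.Ico 1 k,
      av (gd d bv Pᶜ (b0 + c * n2)) ≤ θ + r * sv bv Pᶜ (b0 + c * n2) := by
    intro c hc
    have hc' : c < k := (Finset.mem_Ico.1 hc).2
    have hlen : b0 + c * n2 < (srt bv Pᶜ).length := idx_len bv Pᶜ hQ hb0 hc'
    have hmem : gd d bv Pᶜ (b0 + c * n2) ∈ Pᶜ := gd_mem d bv Pᶜ hlen
    have h2 := hV.2 _ hmem
    have h3 := sv_eq d bv Pᶜ hlen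
    rw [h3]
    linarith
  have h1 : ∑ c ∈ Finset.Ico 1 k, av (gd d bv Pᶜ (b0 + c * n2))
      ≤ ∑ c ∈ Finset.Ico 1 k, (θ + r * sv bv Pᶜ (b0 + c * n2)) :=
    Finset.sum_le_sum key
  have h2 : ∑ c ∈ Finset.Ico 1 k, (θ + r * sv bv Pᶜ (b0 + c * n2))
      = ((k : ℝ) - 1) * θ + r * ∑ c ∈ Finset.Ico 1 k, sv bv Pᶜ (b0 + c * n2) := by
    rw [Finset.sum_add_distrib, Finset.sum_const, Nat.card_Ico, ← Finset.mul_sum,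
      nsmul_eq_mul]
    have : ((k - 1 : ℕ) : ℝ) = (k : ℝ) - 1 := by
      have : (1 : ℕ) ≤ k := hk
      push_cast [Nat.cast_sub this]
      ring
    rw [this]
  have h3 : ∑ c ∈ Finset.Ico 1 k, sv bv Pᶜ (b0 + c * n2) ≤ gam bv Pᶜ n2 k :=
    bnd_erase_le_gam d bv hb Pᶜ hQ hb0
  have h4 := alph_le_bnd d av ha P hP ha0
  have : r * ∑ c ∈ Finset.Ico 1 k, sv bv Pᶜ (b0 + c * n2) ≤ r * gam bv Pᶜ n2 k :=
    mul_le_mul_of_nonneg_left h3 hr.le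
  linarith

lemma E1_of_suff (ha : ∀ j, 0 ≤ av j) (hb : ∀ j, 0 ≤ bv j)
    (hP : P.card = n1 * k) (hQ : (Pᶜ : Finset (Fin m)).card = n2 * k)
    (hn1 : 0 < n1) (hn2 : 0 < n2) (hk : 0 < k)
    {r θ : ℝ} (hr : 0 < r) (hV : Valid av bv P r θ)
    (hsuff : gam av P n1 k ≤ r * alph bv Pᶜ n2 k + ((k : ℝ) - 1) * θ) :
    E1cross d av bv n1 n2 k P := by
  intro b0 hb0 a0 ha0
  refine ⟨gd d av P a0, gd_mem_bnd d av P hk, ?_⟩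
  rw [sum_bnd_erase d av P hP ha0 hk bv]
  have key : ∀ c ∈ Finset.Ico 1 k,
      r * bv (gd d av P (a0 + c * n1)) ≤ sv av P (a0 + c * n1) - θ := by
    intro c hc
    have hc' : c < k := (Finset.mem_Ico.1 hc).2
    have hlen : a0 + c * n1 < (srt av P).length := idx_len av P hP ha0 hc'
    have hmem : gd d av P (a0 + c * n1) ∈ P := gd_mem d av P hlen
    have h2 := hV.1 _ hmem
    have h3 := sv_eq d av P hlen
    rw [h3]
    linarith
  have h1 : r * ∑ c ∈ Finset.Ico 1 k, bv (gd d av P (a0 + c * n1))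
      ≤ ∑ c ∈ Finset.Ico 1 k, (sv av P (a0 + c * n1) - θ) := by
    rw [Finset.mul_sum]
    exact Finset.sum_le_sum key
  have h2 : ∑ c ∈ Finset.Ico 1 k, (sv av P (a0 + c * n1) - θ)
      = (∑ c ∈ Finset.Ico 1 k, sv av P (a0 + c * n1)) - ((k : ℝ) - 1) * θ := by
    rw [Finset.sum_sub_distrib, Finset.sum_const, Nat.card_Ico, nsmul_eq_mul]
    have : ((k - 1 : ℕ) : ℝ) = (k : ℝ) - 1 := by
      have : (1 : ℕ) ≤ k := hk
      push_cast [Nat.cast_sub this]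
      ring
    rw [this]
  have h3 : ∑ c ∈ Finset.Ico 1 k, sv av P (a0 + c * n1) ≤ gam av P n1 k :=
    bnd_erase_le_gam d av ha P hP ha0
  have h4 := alph_le_bnd d bv hb Pᶜ hQ hb0
  have h5 : r * ∑ c ∈ Finset.Ico 1 k, bv (gd d av P (a0 + c * n1))
      ≤ r * alph bv Pᶜ n2 k := by linarith
  have := (mul_le_mul_iff_right₀ hr).1 h5
  linarith

lemma E0_direct (ha : ∀ j, 0 ≤ av j) (hb : ∀ j, 0 ≤ bv j)
    (hP : P.card = n1 * k) (hQ : (Pᶜ : Finset (Fin m)).card = n2 * k)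
    (hn1 : 0 < n1) (hn2 : 0 < n2) (hk : 0 < k)
    (hdom : ∀ p ∈ P, ∀ q ∈ (Pᶜ : Finset (Fin m)), av q ≤ av p) :
    E0cross d av bv n1 n2 k P := by
  intro a0 ha0 b0 hb0
  refine ⟨gd d bv Pᶜ b0, gd_mem_bnd d bv Pᶜ hk, ?_⟩
  rw [sum_bnd_erase d bv Pᶜ hQ hb0 hk av, sum_bnd d av P hP ha0 av]
  have h1 : ∑ c ∈ Finset.Ico 1 k, av (gd d bv Pᶜ (b0 + c * n2))
      ≤ ∑ c ∈ Finset.Ico 1 k, av (gd d av P (a0 + c * n1)) := by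
    apply Finset.sum_le_sum
    intro c hc
    have hc' : c < k := (Finset.mem_Ico.1 hc).2
    exact hdom _ (gd_mem d av P (idx_len av P hP ha0 hc')) _
      (gd_mem d bv Pᶜ (idx_len bv Pᶜ hQ hb0 hc'))
  have h2 : ∑ c ∈ Finset.Ico 1 k, av (gd d av P (a0 + c * n1))
      ≤ ∑ c ∈ Finset.range k, av (gd d av P (a0 + c * n1)) := by
    apply Finset.sum_le_sum_of_subset_of_nonneg
    · intro c hc
      exact Finset.mem_range.2 (Finset.mem_Ico.1 hc).2
    · intro c _ _; exact ha _
  linarith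

lemma E1_direct (ha : ∀ j, 0 ≤ av j) (hb : ∀ j, 0 ≤ bv j)
    (hP : P.card = n1 * k) (hQ : (Pᶜ : Finset (Fin m)).card = n2 * k)
    (hn1 : 0 < n1) (hn2 : 0 < n2) (hk : 0 < k)
    (hdom : ∀ p ∈ P, ∀ q ∈ (Pᶜ : Finset (Fin m)), bv p ≤ bv q) :
    E1cross d av bv n1 n2 k P := by
  intro b0 hb0 a0 ha0
  refine ⟨gd d av P a0, gd_mem_bnd d av P hk, ?_⟩
  rw [sum_bnd_erase d av P hP ha0 hk bv, sum_bnd d bv Pᶜ hQ hb0 bv]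
  have h1 : ∑ c ∈ Finset.Ico 1 k, bv (gd d av P (a0 + c * n1))
      ≤ ∑ c ∈ Finset.Ico 1 k, bv (gd d bv Pᶜ (b0 + c * n2)) := by
    apply Finset.sum_le_sum
    intro c hc
    have hc' : c < k := (Finset.mem_Ico.1 hc).2
    exact hdom _ (gd_mem d av P (idx_len av P hP ha0 hc')) _
      (gd_mem d bv Pᶜ (idx_len bv Pᶜ hQ hb0 hc'))
  have h2 : ∑ c ∈ Finset.Ico 1 k, bv (gd d bv Pᶜ (b0 + c * n2))
      ≤ ∑ c ∈ Finset.range k, bv (gd d bv Pᶜ (b0 + c * n2)) := by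
    apply Finset.sum_le_sum_of_subset_of_nonneg
    · intro c hc
      exact Finset.mem_range.2 (Finset.mem_Ico.1 hc).2
    · intro c _ _; exact hb _
  linarith

end suff

/-! ### fPO core inequality -/

lemma no_improvement (av bv : Fin m → ℝ) {P : Finset (Fin m)} {r θ : ℝ} (hr : 0 < r)
    (hV : Valid av bv P r θ) (z : Fin m → ℝ) (hz0 : ∀ j, 0 ≤ z j) (hz1 : ∀ j, z j ≤ 1)
    (hzs : ∑ j, z j = (P.card : ℝ)) :
    (∑ j, av j * z j) + r * (∑ j, bv j * (1 - z j))
      ≤ (∑ j ∈ P, av j) + r * (∑ j ∈ Pᶜ, bv j) := by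
  set c : Fin m → ℝ := fun j => av j - r * bv j with hc
  have key : ∑ j, c j * z j ≤ ∑ j ∈ P, c j := by
    have h1 : ∀ j ∈ P, c j * z j ≤ θ * z j + (c j - θ) := by
      intro j hj
      have h2' : θ ≤ c j := hV.1 j hj
      nlinarith [hz1 j, hz0 j]
    have h2 : ∀ j ∈ Pᶜ, c j * z j ≤ θ * z j := by
      intro j hj
      have h3' : c j ≤ θ := hV.2 j hj
      nlinarith [hz0 j]
    have hsplit : ∑ j, c j * z j = ∑ j ∈ P, c j * z j + ∑ j ∈ Pᶜ, c j * z j :=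
      (Finset.sum_add_sum_compl P _).symm
    have hb1 : ∑ j ∈ P, c j * z j ≤ ∑ j ∈ P, (θ * z j + (c j - θ)) := Finset.sum_le_sum h1
    have hb2 : ∑ j ∈ Pᶜ, c j * z j ≤ ∑ j ∈ Pᶜ, θ * z j := Finset.sum_le_sum h2
    have he1 : ∑ j ∈ P, (θ * z j + (c j - θ)) =
        (∑ j ∈ P, θ * z j) + (∑ j ∈ P, c j) - (P.card : ℝ) * θ := by
      rw [Finset.sum_add_distrib, Finset.sum_sub_distrib, Finset.sum_const, nsmul_eq_mul]
      ring
    have he2 : (∑ j ∈ P, θ * z j) + ∑ j ∈ Pᶜ, θ * z j = θ * ∑ j, z j := by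
      rw [Finset.mul_sum, Finset.sum_add_sum_compl]
    have := hzs
    calc ∑ j, c j * z j = ∑ j ∈ P, c j * z j + ∑ j ∈ Pᶜ, c j * z j := hsplit
      _ ≤ ((∑ j ∈ P, θ * z j) + (∑ j ∈ P, c j) - (P.card : ℝ) * θ) + ∑ j ∈ Pᶜ, θ * z j := by
          linarith
      _ = θ * (∑ j, z j) + (∑ j ∈ P, c j) - (P.card : ℝ) * θ := by
          rw [← he2]; ring
      _ = ∑ j ∈ P, c j := by rw [hzs]; ring
  have hsum : ∑ j, av j * z j + r * (∑ j, bv j * (1 - z j))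
      = (∑ j, c j * z j) + r * ∑ j, bv j := by
    simp only [hc, Finset.mul_sum, ← Finset.sum_add_distrib]
    apply Finset.sum_congr rfl
    intro j _
    ring
  have hsplit2 : ∑ j, bv j = ∑ j ∈ P, bv j + ∑ j ∈ Pᶜ, bv j :=
    (Finset.sum_add_sum_compl P _).symm
  have hcs : ∑ j ∈ P, c j = ∑ j ∈ P, av j - r * ∑ j ∈ P, bv j := by
    rw [hc, Finset.sum_sub_distrib, Finset.mul_sum]
  rw [hsum]
  rw [hsplit2]
  linarith

/-! ### rank measure -/

noncomputable def rnk (bv : Fin m → ℝ) (p : Fin m) : ℕ :=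
  (Finset.univ.filter (fun j => bv j < bv p ∨ (bv j = bv p ∧ j < p))).card

noncomputable def meas (bv : Fin m → ℝ) (P : Finset (Fin m)) : ℕ := ∑ p ∈ P, rnk bv p

lemma rnk_lt (bv : Fin m → ℝ) {p q : Fin m} (h : bv q < bv p) : rnk bv q < rnk bv p := by
  apply Finset.card_lt_card
  constructor
  · intro j hj
    rcases Finset.mem_filter.1 hj with ⟨_, hj2⟩
    refine Finset.mem_filter.2 ⟨Finset.mem_univ _, Or.inl ?_⟩
    rcases hj2 with h1 | ⟨h1, _⟩
    · linarith
    · linarith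
  · intro hsub
    have hq : q ∈ Finset.univ.filter (fun j => bv j < bv p ∨ (bv j = bv p ∧ j < p)) :=
      Finset.mem_filter.2 ⟨Finset.mem_univ _, Or.inl h⟩
    have := Finset.mem_filter.1 (hsub hq)
    rcases this.2 with h1 | ⟨_, h2⟩
    · exact lt_irrefl _ h1
    · exact lt_irrefl _ h2

lemma meas_swap (bv : Fin m → ℝ) {P : Finset (Fin m)} {p q : Fin m}
    (hp : p ∈ P) (hq : q ∉ P) (h : bv q < bv p) :
    meas bv (insert q (P.erase p)) < meas bv P := by
  have hqe : q ∉ P.erase p := fun hc => hq (Finset.mem_of_mem_erase hc)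
  simp only [meas]
  rw [Finset.sum_insert hqe]
  have h1 : ∑ x ∈ P.erase p, rnk bv x + rnk bv p = ∑ x ∈ P, rnk bv x :=
    Finset.sum_erase_add P _ hp
  have h2 : rnk bv q < rnk bv p := rnk_lt bv h
  omega

lemma compl_insert_erase {P : Finset (Fin m)} {p q : Fin m} (hp : p ∈ P) (hq : q ∉ P) :
    (insert q (P.erase p))ᶜ = insert p ((Pᶜ).erase q) := by
  have hpq : p ≠ q := fun h => hq (h ▸ hp)
  ext j
  simp only [Finset.mem_compl, Finset.mem_insert, Finset.mem_erase]
  constructor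
  · intro h
    push_neg at h
    obtain ⟨h1, h2⟩ := h
    by_cases hjp : j = p
    · exact Or.inl hjp
    · exact Or.inr ⟨h1, h2 hjp⟩
  · intro h hmem
    rcases hmem with rfl | ⟨hne, hjP⟩
    · rcases h with h | ⟨h, _⟩
      · exact hpq h.symm
      · exact h rfl
    · rcases h with rfl | ⟨_, hnP⟩
      · exact hne rfl
      · exact hnP hjP

lemma sweep_aux (d : Fin m) (av bv : Fin m → ℝ) (ha : ∀ j, 0 ≤ av j) (hb : ∀ j, 0 ≤ bv j)
    {n1 n2 k : ℕ} (hn1 : 0 < n1) (hn2 : 0 < n2) (hk : 0 < k) (N : ℕ) :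
    ∀ (P : Finset (Fin m)) (r θ : ℝ), meas bv P < N → P.card = n1 * k →
    ((Pᶜ : Finset (Fin m))).card = n2 * k → 0 < r → Valid av bv P r θ →
    E0cross d av bv n1 n2 k P →
    ∃ (P' : Finset (Fin m)) (r' θ' : ℝ), P'.card = n1 * k ∧
      ((P'ᶜ : Finset (Fin m))).card = n2 * k ∧ 0 < r' ∧ Valid av bv P' r' θ' ∧
      E0cross d av bv n1 n2 k P' ∧ E1cross d av bv n1 n2 k P' := by
  induction N with
  | zero => intro P r θ hmeas; omega
  | succ N IH =>
    intro P r θ hmeas hP hQ hr hV hE0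
    by_cases hE1 : E1cross d av bv n1 n2 k P
    · exact ⟨P, r, θ, hP, hQ, hr, hV, hE0, hE1⟩
    set W := (P ×ˢ (Pᶜ : Finset (Fin m))).filter (fun pq => bv pq.2 < bv pq.1) with hW
    have hWne : W.Nonempty := by
      by_contra hemp
      apply hE1
      apply E1_direct d av bv ha hb hP hQ hn1 hn2 hk
      intro p hp q hq
      by_contra hlt
      push_neg at hlt
      exact hemp ⟨(p, q), Finset.mem_filter.2 ⟨Finset.mem_product.2 ⟨hp, hq⟩, hlt⟩⟩
    obtain ⟨pq, hpqW, hmin⟩ := Finset.exists_min_image W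
      (fun pq => (av pq.1 - av pq.2) / (bv pq.1 - bv pq.2)) hWne
    obtain ⟨hmemPQ, hbvlt⟩ := Finset.mem_filter.1 hpqW
    obtain ⟨hp1, hq2⟩ := Finset.mem_product.1 hmemPQ
    set p0 := pq.1 with hp0
    set q0 := pq.2 with hq0
    have hq0nP : q0 ∉ P := Finset.mem_compl.1 hq2
    have hp0nQ : p0 ∉ (Pᶜ : Finset (Fin m)) := by simp [hp1]
    set r' := (av p0 - av q0) / (bv p0 - bv q0) with hr'def
    -- every "inverted" pair has ratio at least r
    have hratio : ∀ p ∈ P, ∀ q ∈ (Pᶜ : Finset (Fin m)), bv q < bv p →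
        r ≤ (av p - av q) / (bv p - bv q) := by
      intro p hp q hq hlt
      have h1 := hV.1 p hp
      have h2 := hV.2 q hq
      rw [le_div_iff₀ (by linarith)]
      linarith
    have hrr' : r ≤ r' := hratio p0 hp1 q0 hq2 hbvlt
    have hr'pos : 0 < r' := lt_of_lt_of_le hr hrr'
    -- key pairwise inequality at r'
    have hB : ∀ p ∈ P, ∀ q ∈ (Pᶜ : Finset (Fin m)),
        av q - r' * bv q ≤ av p - r' * bv p := by
      intro p hp q hq
      by_cases hlt : bv q < bv p
      · have := hmin (p, q) (Finset.mem_filter.2 ⟨Finset.mem_product.2 ⟨hp, hq⟩, hlt⟩)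
        rw [le_div_iff₀ (by simp only; linarith)] at this
        simp only at this
        linarith
      · push_neg at hlt
        have h1 := hV.1 p hp
        have h2 := hV.2 q hq
        nlinarith [hrr']
    have hθeq : av q0 - r' * bv q0 = av p0 - r' * bv p0 := by
      have hne : bv p0 - bv q0 ≠ 0 := by linarith
      have : r' * (bv p0 - bv q0) = av p0 - av q0 := by
        rw [hr'def, div_mul_cancel₀ _ hne]
      linarith [this]
    set θ' := av p0 - r' * bv p0 with hθ'def
    have hVP : Valid av bv P r' θ' := by
      constructor
      · intro p hp
        have h := hB p hp q0 hq2
        rw [hθ'def]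
        linarith [hθeq]
      · intro q hq
        exact hB p0 hp1 q hq
    by_cases hs : gam av P n1 k ≤ r' * alph bv (Pᶜ) n2 k + ((k : ℝ) - 1) * θ'
    · have hE1' := E1_of_suff d av bv ha hb hP hQ hn1 hn2 hk hr'pos hVP hs
      exact ⟨P, r', θ', hP, hQ, hr'pos, hVP, hE0, hE1'⟩
    · push_neg at hs
      set P' := insert q0 (P.erase p0) with hP'def
      have hq0e : q0 ∉ P.erase p0 := fun hc => hq0nP (Finset.mem_of_mem_erase hc)
      have hP' : P'.card = n1 * k := by
        rw [hP'def, Finset.card_insert_of_notMem hq0e, Finset.card_erase_of_mem hp1, hP]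
        have : 0 < n1 * k := Nat.mul_pos hn1 hk
        omega
      have hcompl : (P'ᶜ : Finset (Fin m)) = insert p0 ((Pᶜ).erase q0) :=
        compl_insert_erase hp1 hq0nP
      have hQ' : ((P'ᶜ : Finset (Fin m))).card = n2 * k := by
        rw [hcompl, Finset.card_insert_of_notMem
          (fun hc => hp0nQ (Finset.mem_of_mem_erase hc)),
          Finset.card_erase_of_mem hq2, hQ]
        have : 0 < n2 * k := Nat.mul_pos hn2 hk
        omega
      have hVP' : Valid av bv P' r' θ' := by
        constructor
        · intro p hp
          rcases Finset.mem_insert.1 hp with rfl | hp'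
          · rw [← hθeq]
          · exact hVP.1 p (Finset.mem_of_mem_erase hp')
        · intro q hq
          rw [hcompl] at hq
          rcases Finset.mem_insert.1 hq with rfl | hq'
          · rw [hθ'def]
          · exact hVP.2 q (Finset.mem_of_mem_erase hq')
      have s1 : gam av P n1 k ≤ alph av P' n1 k := swap_ge av ha P hp1 hq0nP n1 k hn1
      have s2 : gam bv (P'ᶜ) n2 k ≤ alph bv (Pᶜ) n2 k := by
        rw [hcompl]
        exact swap_le bv hb (Pᶜ) hq2 hp0nQ n2 k hn2
      have hE0suff : r' * gam bv (P'ᶜ) n2 k + ((k : ℝ) - 1) * θ' ≤ alph av P' n1 k := by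
        have := mul_le_mul_of_nonneg_left s2 hr'pos.le
        linarith
      have hE0' : E0cross d av bv n1 n2 k P' :=
        E0_of_suff d av bv ha hb hP' hQ' hn1 hn2 hk hr'pos hVP' hE0suff
      have hmeas' : meas bv P' < meas bv P := meas_swap bv hp1 hq0nP hbvlt
      exact IH P' r' θ' (by omega) hP' hQ' hr'pos hVP' hE0'

/-- a two-stage optimal split: maximize `∑ av`, then minimize `∑ bv`. -/
lemma initial_split (d : Fin m) (av bv : Fin m → ℝ) (ha : ∀ j, 0 ≤ av j)
    (hb : ∀ j, 0 ≤ bv j) {n1 n2 k : ℕ} (hn1 : 0 < n1) (hn2 : 0 < n2) (hk : 0 < k)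
    (hmK : n1 * k + n2 * k = m) :
    ∃ (P : Finset (Fin m)) (r θ : ℝ), P.card = n1 * k ∧
      ((Pᶜ : Finset (Fin m))).card = n2 * k ∧ 0 < r ∧ Valid av bv P r θ ∧
      E0cross d av bv n1 n2 k P := by
  set K := n1 * k with hK
  have hKm : K ≤ m := by omega
  set T := (Finset.univ : Finset (Fin m)).powersetCard K with hT
  have hTne : T.Nonempty := by
    obtain ⟨t, _, ht⟩ := Finset.exists_subset_card_eq (s := (Finset.univ : Finset (Fin m))) (n := K)
      (by simpa using hKm)
    exact ⟨t, Finset.mem_powersetCard.2 ⟨Finset.subset_univ _, ht⟩⟩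
  obtain ⟨P1, hP1T, hP1max⟩ := Finset.exists_max_image T (fun P => ∑ p ∈ P, av p) hTne
  set T2 := T.filter (fun P => ∑ p ∈ P1, av p ≤ ∑ p ∈ P, av p) with hT2
  have hT2ne : T2.Nonempty := ⟨P1, Finset.mem_filter.2 ⟨hP1T, le_refl _⟩⟩
  obtain ⟨P, hPT2, hPmin⟩ := Finset.exists_min_image T2 (fun P => ∑ p ∈ P, bv p) hT2ne
  obtain ⟨hPT, hPf⟩ := Finset.mem_filter.1 hPT2
  have hPcard : P.card = K := (Finset.mem_powersetCard.1 hPT).2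
  have hQcard : ((Pᶜ : Finset (Fin m))).card = n2 * k := by
    rw [Finset.card_compl, hPcard]
    simp only [Fintype.card_fin]
    omega
  -- swap computations
  have hswap : ∀ p ∈ P, ∀ q ∈ (Pᶜ : Finset (Fin m)),
      av q ≤ av p ∧ (av p = av q → bv p ≤ bv q) := by
    intro p hp q hq
    have hqP : q ∉ P := Finset.mem_compl.1 hq
    have hqe : q ∉ P.erase p := fun hc => hqP (Finset.mem_of_mem_erase hc)
    set P' := insert q (P.erase p) with hP'
    have hP'T : P' ∈ T := by
      refine Finset.mem_powersetCard.2 ⟨Finset.subset_univ _, ?_⟩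
      rw [hP', Finset.card_insert_of_notMem hqe, Finset.card_erase_of_mem hp, hPcard]
      have : 0 < K := by positivity
      omega
    have hsumav : ∑ x ∈ P', av x = ∑ x ∈ P, av x - av p + av q := by
      rw [hP', Finset.sum_insert hqe, Finset.sum_erase_eq_sub hp]
      ring
    have hsumbv : ∑ x ∈ P', bv x = ∑ x ∈ P, bv x - bv p + bv q := by
      rw [hP', Finset.sum_insert hqe, Finset.sum_erase_eq_sub hp]
      ring
    have hle : ∑ x ∈ P', av x ≤ ∑ x ∈ P1, av x := hP1max P' hP'T
    constructor
    · by_contra hc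
      push_neg at hc
      have : ∑ x ∈ P1, av x ≤ ∑ x ∈ P, av x := hPf
      rw [hsumav] at hle
      linarith
    · intro heq
      by_contra hc
      push_neg at hc
      have hP'T2 : P' ∈ T2 := by
        refine Finset.mem_filter.2 ⟨hP'T, ?_⟩
        rw [hsumav, heq]
        have : ∑ x ∈ P1, av x ≤ ∑ x ∈ P, av x := hPf
        linarith
      have := hPmin P' hP'T2
      rw [hsumbv] at this
      linarith
  -- construct the ratio r
  set W := (P ×ˢ (Pᶜ : Finset (Fin m))).filter (fun pq => bv pq.2 < bv pq.1) with hW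
  have hWpos : ∀ pq ∈ W, 0 < (av pq.1 - av pq.2) / (bv pq.1 - bv pq.2) := by
    intro pq hpq
    obtain ⟨hmem, hlt⟩ := Finset.mem_filter.1 hpq
    obtain ⟨hp, hq⟩ := Finset.mem_product.1 hmem
    obtain ⟨h1, h2⟩ := hswap _ hp _ hq
    have h3 : av pq.2 < av pq.1 := by
      rcases eq_or_lt_of_le h1 with heq | hlt2
      · exfalso
        have := h2 heq.symm
        linarith
      · exact hlt2
    apply div_pos <;> linarith
  have hrex : ∃ r : ℝ, 0 < r ∧ ∀ pq ∈ W, r ≤ (av pq.1 - av pq.2) / (bv pq.1 - bv pq.2) := by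
    rcases W.eq_empty_or_nonempty with hemp | hne
    · exact ⟨1, one_pos, by simp [hemp]⟩
    · obtain ⟨pq0, hpq0, hmin0⟩ := Finset.exists_min_image W
        (fun pq => (av pq.1 - av pq.2) / (bv pq.1 - bv pq.2)) hne
      exact ⟨_, hWpos pq0 hpq0, hmin0⟩
  obtain ⟨r, hrpos, hrle⟩ := hrex
  -- pairwise inequality at r
  have hpair : ∀ p ∈ P, ∀ q ∈ (Pᶜ : Finset (Fin m)),
      av q - r * bv q ≤ av p - r * bv p := by
    intro p hp q hq
    by_cases hlt : bv q < bv p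
    · have := hrle (p, q) (Finset.mem_filter.2 ⟨Finset.mem_product.2 ⟨hp, hq⟩, hlt⟩)
      rw [le_div_iff₀ (by simp only; linarith)] at this
      simp only at this
      linarith
    · push_neg at hlt
      obtain ⟨h1, _⟩ := hswap p hp q hq
      nlinarith
  -- threshold
  have hPne : P.Nonempty := Finset.card_pos.1 (by rw [hPcard]; positivity)
  obtain ⟨pm, hpmP, hpmmin⟩ := Finset.exists_min_image P (fun p => av p - r * bv p) hPne
  refine ⟨P, r, av pm - r * bv pm, hPcard, hQcard, hrpos, ⟨?_, ?_⟩, ?_⟩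
  · intro p hp
    exact hpmmin p hp
  · intro q hq
    exact hpair pm hpmP q hq
  · exact E0_direct d av bv ha hb hPcard hQcard hn1 hn2 hk
      (fun p hp q hq => (hswap p hp q hq).1)

/-- round-robin within one type is EF1 -/
lemma within_EF1 (d : Fin m) (w : Fin m → ℝ) (hw : ∀ j, 0 ≤ w j) (S : Finset (Fin m))
    {s k : ℕ} (hcard : S.card = s * k) (hk : 0 < k) {a0 b0 : ℕ} (ha0 : a0 < s)
    (hb0 : b0 < s) :
    ∃ j ∈ bnd d w S s k b0,
      ∑ z ∈ (bnd d w S s k b0).erase j, w z ≤ ∑ z ∈ bnd d w S s k a0, w z := by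
  refine ⟨gd d w S b0, gd_mem_bnd d w S hk, ?_⟩
  rw [sum_bnd_erase d w S hcard hb0 hk w, sum_bnd d w S hcard ha0 w]
  have hsv : ∀ c < k, w (gd d w S (a0 + c * s)) = sv w S (a0 + c * s) := by
    intro c hc
    exact (sv_eq d w S (idx_len w S hcard ha0 hc)).symm
  have hsv2 : ∀ c, 1 ≤ c → c < k → w (gd d w S (b0 + c * s)) = sv w S (b0 + c * s) := by
    intro c _ hc
    exact (sv_eq d w S (idx_len w S hcard hb0 hc)).symm
  have h1 : ∑ c ∈ Finset.Ico 1 k, w (gd d w S (b0 + c * s))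
      = ∑ c ∈ Finset.range (k - 1), sv w S (b0 + (1 + c) * s) := by
    rw [Finset.sum_Ico_eq_sum_range]
    apply Finset.sum_congr rfl
    intro c hc
    have hck : 1 + c < k := by
      have := Finset.mem_range.1 hc
      omega
    exact hsv2 (1 + c) (by omega) hck
  rw [h1]
  have h2 : ∑ c ∈ Finset.range (k - 1), sv w S (b0 + (1 + c) * s)
      ≤ ∑ c ∈ Finset.range (k - 1), sv w S (a0 + c * s) := by
    apply Finset.sum_le_sum
    intro c _
    apply sv_anti w hw S
    have : b0 + (1 + c) * s = b0 + s + c * s := by ring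
    omega
  have h3 : ∑ c ∈ Finset.range (k - 1), sv w S (a0 + c * s)
      ≤ ∑ c ∈ Finset.range k, sv w S (a0 + c * s) := by
    apply Finset.sum_le_sum_of_subset_of_nonneg
    · exact Finset.range_subset_range.2 (by omega)
    · intro c _ _
      exact sv_nonneg w hw S _
  have h4 : ∑ c ∈ Finset.range k, sv w S (a0 + c * s)
      = ∑ c ∈ Finset.range k, w (gd d w S (a0 + c * s)) := by
    apply Finset.sum_congr rfl
    intro c hc
    exact (hsv c (Finset.mem_range.1 hc)).symm
  linarith

/-- the bundles partition `S`: summing over bundles equals summing over `S` -/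
lemma sum_bnd_partition (d : Fin m) (w : Fin m → ℝ) (S : Finset (Fin m))
    {s k : ℕ} (hcard : S.card = s * k) (hs : 0 < s) (f : Fin m → ℝ) :
    ∑ a ∈ Finset.range s, ∑ z ∈ bnd d w S s k a, f z = ∑ z ∈ S, f z := by
  rw [← Finset.sum_biUnion]
  · apply Finset.sum_congr _ (fun _ _ => rfl)
    apply Finset.Subset.antisymm
    · intro z hz
      rcases Finset.mem_biUnion.1 hz with ⟨a, haM, hza⟩
      exact bnd_subset d w S hcard (Finset.mem_range.1 haM) hza
    · intro z hz
      obtain ⟨a, haz, hmem⟩ := bnd_exists d w S hcard hs hz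
      exact Finset.mem_biUnion.2 ⟨a, Finset.mem_range.2 haz, hmem⟩
  · intro a haM a' haM' hne
    simp only [Finset.coe_range, Set.mem_Iio] at haM haM'
    apply Finset.disjoint_left.2
    intro z hz hz'
    exact hne (bnd_unique d w S hcard haM haM' hz hz')

/-- single-type case: round-robin over everything -/
lemma single_allocation {n k : ℕ} (hn : 0 < n) (hk : 0 < k) (hm : m = n * k)
    (d : Fin m) (w : Fin m → ℝ) (hw : ∀ j, 0 ≤ w j) :
    ∃ A : Fin n → Finset (Fin m),
      (∀ j : Fin m, ∃! i : Fin n, j ∈ A i) ∧ (∀ i : Fin n, (A i).card = k) ∧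
      (∀ i i' : Fin n, ∃ j ∈ A i',
        ∑ z ∈ (A i').erase j, w z ≤ ∑ z ∈ A i, w z) ∧
      (∀ f : Fin m → ℝ, ∑ i : Fin n, ∑ z ∈ A i, f z = ∑ z : Fin m, f z) := by
  have hcard : (Finset.univ : Finset (Fin m)).card = n * k := by simp [hm]
  refine ⟨fun i => bnd d w Finset.univ n k i.val, ?_, ?_, ?_, ?_⟩
  · intro j
    obtain ⟨a, ha, hmem⟩ := bnd_exists d w Finset.univ hcard hn (Finset.mem_univ j)
    refine ⟨⟨a, ha⟩, hmem, ?_⟩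
    intro i' hi'
    apply Fin.ext
    exact bnd_unique d w Finset.univ hcard i'.isLt ha hi' hmem
  · intro i
    exact bnd_card d w Finset.univ hcard i.isLt
  · intro i i'
    exact within_EF1 d w hw Finset.univ hcard hk i.isLt i'.isLt
  · intro f
    rw [Fin.sum_univ_eq_sum_range (fun a => ∑ z ∈ bnd d w Finset.univ n k a, f z)]
    exact sum_bnd_partition d w Finset.univ hcard hn f

/-- main case: two nonempty types -/
lemma two_type_allocation {n k : ℕ} (hn : 0 < n) (hk : 0 < k) (hm : m = n * k)
    (t : Fin n → Fin 2) (av bv : Fin m → ℝ) (ha : ∀ j, 0 ≤ av j) (hb : ∀ j, 0 ≤ bv j)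
    (v : Fin n → Fin m → ℝ)
    (hv0 : ∀ i, t i = 0 → v i = av) (hv1 : ∀ i, ¬ t i = 0 → v i = bv)
    (d : Fin m)
    (hn1 : 0 < (Finset.univ.filter (fun i : Fin n => t i = 0)).card)
    (hn2 : 0 < (Finset.univ.filter (fun i : Fin n => ¬ t i = 0)).card) :
    ∃ A : Fin n → Finset (Fin m),
      IsBalanced n m k A ∧ IsEF1 n m v A ∧ IsFPO n m k v A := by
  classical
  set T0 := Finset.univ.filter (fun i : Fin n => t i = 0) with hT0
  set T1 := Finset.univ.filter (fun i : Fin n => ¬ t i = 0) with hT1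
  set n1 := T0.card with hn1def
  set n2 := T1.card with hn2def
  have hn12 : n1 + n2 = n := by
    rw [hn1def, hn2def, hT0, hT1, Finset.card_filter_add_card_filter_not]
    simp
  have hmK : n1 * k + n2 * k = m := by
    rw [hm, ← Nat.add_mul, hn12]
  obtain ⟨P0, r0, θ0, hP0, hQ0, hr0, hV0, hE00⟩ :=
    initial_split d av bv ha hb hn1 hn2 hk hmK
  obtain ⟨P, r, θ, hP, hQ, hr, hV, hE0, hE1⟩ :=
    sweep_aux d av bv ha hb hn1 hn2 hk (meas bv P0 + 1) P0 r0 θ0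
      (Nat.lt_succ_self _) hP0 hQ0 hr0 hV0 hE00
  set e0 := T0.orderIsoOfFin (rfl : T0.card = n1) with he0
  set e1 := T1.orderIsoOfFin (rfl : T1.card = n2) with he1
  have hmem0 : ∀ i : Fin n, t i = 0 → i ∈ T0 := fun i h =>
    Finset.mem_filter.2 ⟨Finset.mem_univ i, h⟩
  have hmem1 : ∀ i : Fin n, ¬ t i = 0 → i ∈ T1 := fun i h =>
    Finset.mem_filter.2 ⟨Finset.mem_univ i, h⟩
  set A : Fin n → Finset (Fin m) := fun i =>
    if h : t i = 0 then bnd d av P n1 k ((e0.symm ⟨i, hmem0 i h⟩ : Fin n1) : ℕ)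
    else bnd d bv Pᶜ n2 k ((e1.symm ⟨i, hmem1 i h⟩ : Fin n2) : ℕ) with hA
  have hA0 : ∀ (i : Fin n) (h : t i = 0),
      A i = bnd d av P n1 k ((e0.symm ⟨i, hmem0 i h⟩ : Fin n1) : ℕ) := by
    intro i h
    rw [hA]
    simp only [dif_pos h]
  have hA1 : ∀ (i : Fin n) (h : ¬ t i = 0),
      A i = bnd d bv Pᶜ n2 k ((e1.symm ⟨i, hmem1 i h⟩ : Fin n2) : ℕ) := by
    intro i h
    rw [hA]
    simp only [dif_neg h]
  -- the agent corresponding to each bundle index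
  have hag0 : ∀ a : Fin n1, ∃ i : Fin n, ∃ h : t i = 0,
      (e0.symm ⟨i, hmem0 i h⟩ : Fin n1) = a := by
    intro a
    have hta : t ((e0 a : {x // x ∈ T0}) : Fin n) = 0 := (Finset.mem_filter.1 (e0 a).2).2
    refine ⟨((e0 a : {x // x ∈ T0}) : Fin n), hta, ?_⟩
    have heq : (⟨((e0 a : {x // x ∈ T0}) : Fin n), hmem0 _ hta⟩ : {x // x ∈ T0}) = e0 a :=
      Subtype.ext rfl
    rw [heq, OrderIso.symm_apply_apply]
  have hag1 : ∀ a : Fin n2, ∃ i : Fin n, ∃ h : ¬ t i = 0,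
      (e1.symm ⟨i, hmem1 i h⟩ : Fin n2) = a := by
    intro a
    have hta : ¬ t ((e1 a : {x // x ∈ T1}) : Fin n) = 0 := (Finset.mem_filter.1 (e1 a).2).2
    refine ⟨((e1 a : {x // x ∈ T1}) : Fin n), hta, ?_⟩
    have heq : (⟨((e1 a : {x // x ∈ T1}) : Fin n), hmem1 _ hta⟩ : {x // x ∈ T1}) = e1 a :=
      Subtype.ext rfl
    rw [heq, OrderIso.symm_apply_apply]
  have hinj0 : ∀ (i i' : Fin n) (h : t i = 0) (h' : t i' = 0),
      ((e0.symm ⟨i, hmem0 i h⟩ : Fin n1) : ℕ)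
        = ((e0.symm ⟨i', hmem0 i' h'⟩ : Fin n1) : ℕ) → i = i' := by
    intro i i' h h' heq
    have h2 : e0.symm ⟨i, hmem0 i h⟩ = e0.symm ⟨i', hmem0 i' h'⟩ := Fin.ext heq
    have h3 := congrArg e0 h2
    rw [OrderIso.apply_symm_apply, OrderIso.apply_symm_apply] at h3
    exact congrArg Subtype.val h3
  have hinj1 : ∀ (i i' : Fin n) (h : ¬ t i = 0) (h' : ¬ t i' = 0),
      ((e1.symm ⟨i, hmem1 i h⟩ : Fin n2) : ℕ)
        = ((e1.symm ⟨i', hmem1 i' h'⟩ : Fin n2) : ℕ) → i = i' := by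
    intro i i' h h' heq
    have h2 : e1.symm ⟨i, hmem1 i h⟩ = e1.symm ⟨i', hmem1 i' h'⟩ := Fin.ext heq
    have h3 := congrArg e1 h2
    rw [OrderIso.apply_symm_apply, OrderIso.apply_symm_apply] at h3
    exact congrArg Subtype.val h3
  -- partition sums
  have hpart0 : ∀ f : Fin m → ℝ, ∑ i ∈ T0, ∑ z ∈ A i, f z = ∑ z ∈ P, f z := by
    intro f
    have h1 : ∑ i ∈ T0, ∑ z ∈ A i, f z = ∑ x : {x // x ∈ T0}, ∑ z ∈ A x.1, f z :=
      (Finset.sum_coe_sort T0 _).symm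
    have h2 : ∑ x : {x // x ∈ T0}, ∑ z ∈ A x.1, f z
        = ∑ a : Fin n1, ∑ z ∈ A ((e0 a : {x // x ∈ T0}) : Fin n), f z :=
      (Equiv.sum_comp e0.toEquiv (fun x => ∑ z ∈ A x.1, f z)).symm
    have h3 : ∀ a : Fin n1, ∑ z ∈ A ((e0 a : {x // x ∈ T0}) : Fin n), f z
        = ∑ z ∈ bnd d av P n1 k (a : ℕ), f z := by
      intro a
      obtain ⟨i, h, hidx⟩ := hag0 a
      have hie : ((e0 a : {x // x ∈ T0}) : Fin n) = i := by
        have := congrArg e0 (Fin.ext (congrArg Fin.val hidx) :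
          e0.symm ⟨i, hmem0 i h⟩ = a).symm
        rw [OrderIso.apply_symm_apply] at this
        exact congrArg Subtype.val this
      rw [hie, hA0 i h, hidx]
    rw [h1, h2]
    rw [Finset.sum_congr rfl (fun a _ => h3 a)]
    rw [Fin.sum_univ_eq_sum_range (fun a => ∑ z ∈ bnd d av P n1 k a, f z)]
    exact sum_bnd_partition d av P hP hn1 f
  have hpart1 : ∀ f : Fin m → ℝ, ∑ i ∈ T1, ∑ z ∈ A i, f z = ∑ z ∈ Pᶜ, f z := by
    intro f
    have h1 : ∑ i ∈ T1, ∑ z ∈ A i, f z = ∑ x : {x // x ∈ T1}, ∑ z ∈ A x.1, f z :=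
      (Finset.sum_coe_sort T1 _).symm
    have h2 : ∑ x : {x // x ∈ T1}, ∑ z ∈ A x.1, f z
        = ∑ a : Fin n2, ∑ z ∈ A ((e1 a : {x // x ∈ T1}) : Fin n), f z :=
      (Equiv.sum_comp e1.toEquiv (fun x => ∑ z ∈ A x.1, f z)).symm
    have h3 : ∀ a : Fin n2, ∑ z ∈ A ((e1 a : {x // x ∈ T1}) : Fin n), f z
        = ∑ z ∈ bnd d bv Pᶜ n2 k (a : ℕ), f z := by
      intro a
      obtain ⟨i, h, hidx⟩ := hag1 a
      have hie : ((e1 a : {x // x ∈ T1}) : Fin n) = i := by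
        have := congrArg e1 (Fin.ext (congrArg Fin.val hidx) :
          e1.symm ⟨i, hmem1 i h⟩ = a).symm
        rw [OrderIso.apply_symm_apply] at this
        exact congrArg Subtype.val this
      rw [hie, hA1 i h, hidx]
    rw [h1, h2]
    rw [Finset.sum_congr rfl (fun a _ => h3 a)]
    rw [Fin.sum_univ_eq_sum_range (fun a => ∑ z ∈ bnd d bv Pᶜ n2 k a, f z)]
    exact sum_bnd_partition d bv Pᶜ hQ hn2 f
  refine ⟨A, ⟨?_, ?_⟩, ?_, ?_⟩
  -- balanced: each good exactly once
  · intro j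
    by_cases hjP : j ∈ P
    · obtain ⟨a, halt, hmem⟩ := bnd_exists d av P hP hn1 hjP
      obtain ⟨i, h, hidx⟩ := hag0 ⟨a, halt⟩
      refine ⟨i, ?_, ?_⟩
      · show j ∈ A i
        rw [hA0 i h, hidx]
        exact hmem
      · intro i' hi'
        by_cases h' : t i' = 0
        · rw [hA0 i' h'] at hi'
          apply hinj0 i' i h' h
          rw [congrArg Fin.val hidx]
          exact bnd_unique d av P hP (e0.symm ⟨i', hmem0 i' h'⟩).isLt halt hi' hmem
        · rw [hA1 i' h'] at hi'
          exact absurd (bnd_subset d bv Pᶜ hQ (e1.symm ⟨i', hmem1 i' h'⟩).isLt hi')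
            (by simp [hjP])
    · have hjQ : j ∈ (Pᶜ : Finset (Fin m)) := Finset.mem_compl.2 hjP
      obtain ⟨a, halt, hmem⟩ := bnd_exists d bv Pᶜ hQ hn2 hjQ
      obtain ⟨i, h, hidx⟩ := hag1 ⟨a, halt⟩
      refine ⟨i, ?_, ?_⟩
      · show j ∈ A i
        rw [hA1 i h, hidx]
        exact hmem
      · intro i' hi'
        by_cases h' : t i' = 0
        · rw [hA0 i' h'] at hi'
          exact absurd (bnd_subset d av P hP (e0.symm ⟨i', hmem0 i' h'⟩).isLt hi') hjP
        · rw [hA1 i' h'] at hi'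
          apply hinj1 i' i h' h
          rw [congrArg Fin.val hidx]
          exact bnd_unique d bv Pᶜ hQ (e1.symm ⟨i', hmem1 i' h'⟩).isLt halt hi' hmem
  -- balanced: cards
  · intro i
    by_cases h : t i = 0
    · rw [hA0 i h]
      exact bnd_card d av P hP (e0.symm ⟨i, hmem0 i h⟩).isLt
    · rw [hA1 i h]
      exact bnd_card d bv Pᶜ hQ (e1.symm ⟨i, hmem1 i h⟩).isLt
  -- EF1
  · intro i i'
    right
    by_cases h : t i = 0 <;> by_cases h' : t i' = 0
    · rw [hv0 i h, hA0 i h, hA0 i' h']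
      exact within_EF1 d av ha P hP hk (e0.symm ⟨i, hmem0 i h⟩).isLt
        (e0.symm ⟨i', hmem0 i' h'⟩).isLt
    · rw [hv0 i h, hA0 i h, hA1 i' h']
      exact hE0 _ (e0.symm ⟨i, hmem0 i h⟩).isLt _ (e1.symm ⟨i', hmem1 i' h'⟩).isLt
    · rw [hv1 i h, hA1 i h, hA0 i' h']
      exact hE1 _ (e1.symm ⟨i, hmem1 i h⟩).isLt _ (e0.symm ⟨i', hmem0 i' h'⟩).isLt
    · rw [hv1 i h, hA1 i h, hA1 i' h']
      exact within_EF1 d bv hb Pᶜ hQ hk (e1.symm ⟨i, hmem1 i h⟩).isLt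
        (e1.symm ⟨i', hmem1 i' h'⟩).isLt
  -- fPO
  · rintro ⟨x, ⟨hx0, hrow, hcol⟩, hall, i0, hst⟩
    set z : Fin m → ℝ := fun j => ∑ i ∈ T0, x i j with hz
    have hz0 : ∀ j, 0 ≤ z j := fun j => Finset.sum_nonneg (fun i _ => hx0 i j)
    have hz1 : ∀ j, z j ≤ 1 := by
      intro j
      have h1 : ∑ i ∈ T0, x i j ≤ ∑ i : Fin n, x i j :=
        Finset.sum_le_sum_of_subset_of_nonneg (Finset.subset_univ _)
          (fun i _ _ => hx0 i j)
      rw [hcol j] at h1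
      exact h1
    have hT01 : ∀ j, ∑ i ∈ T1, x i j = 1 - z j := by
      intro j
      have h1 : ∑ i ∈ T0, x i j + ∑ i ∈ T1, x i j = ∑ i : Fin n, x i j := by
        rw [hT0, hT1]
        exact Finset.sum_filter_add_sum_filter_not _ _ _
      rw [hcol j] at h1
      rw [hz]
      linarith
    have hzsum : ∑ j, z j = (P.card : ℝ) := by
      rw [hz, Finset.sum_comm, hP]
      have : ∀ i ∈ T0, ∑ j : Fin m, x i j = (k : ℝ) := fun i _ => hrow i
      rw [Finset.sum_congr rfl this, Finset.sum_const, nsmul_eq_mul,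
        show T0.card = n1 from hn1def.symm]
      push_cast
      ring
    -- aggregate inequalities
    have hper0 : ∀ i ∈ T0, ∑ z' ∈ A i, av z' ≤ ∑ j : Fin m, av j * x i j := by
      intro i hi
      have h := hall i
      rwa [hv0 i (Finset.mem_filter.1 hi).2] at h
    have hper1 : ∀ i ∈ T1, ∑ z' ∈ A i, bv z' ≤ ∑ j : Fin m, bv j * x i j := by
      intro i hi
      have h := hall i
      rwa [hv1 i (Finset.mem_filter.1 hi).2] at h
    have hswap0 : ∑ i ∈ T0, ∑ j : Fin m, av j * x i j = ∑ j : Fin m, av j * z j := by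
      rw [Finset.sum_comm]
      apply Finset.sum_congr rfl
      intro j _
      rw [hz, Finset.mul_sum]
    have hswap1 : ∑ i ∈ T1, ∑ j : Fin m, bv j * x i j
        = ∑ j : Fin m, bv j * (1 - z j) := by
      rw [Finset.sum_comm]
      apply Finset.sum_congr rfl
      intro j _
      rw [← hT01 j, Finset.mul_sum]
    have hagg0 : ∑ z' ∈ P, av z' ≤ ∑ j : Fin m, av j * z j := by
      rw [← hpart0 av, ← hswap0]
      exact Finset.sum_le_sum hper0
    have hagg1 : ∑ z' ∈ Pᶜ, bv z' ≤ ∑ j : Fin m, bv j * (1 - z j) := by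
      rw [← hpart1 bv, ← hswap1]
      exact Finset.sum_le_sum hper1
    have hni := no_improvement av bv hr hV z hz0 hz1 hzsum
    -- strictness
    have hstrict : (∑ z' ∈ P, av z' < ∑ j : Fin m, av j * z j) ∨
        (∑ z' ∈ Pᶜ, bv z' < ∑ j : Fin m, bv j * (1 - z j)) := by
      by_cases h : t i0 = 0
      · left
        rw [← hpart0 av, ← hswap0]
        apply Finset.sum_lt_sum hper0
        refine ⟨i0, hmem0 i0 h, ?_⟩
        have := hst
        rwa [hv0 i0 h] at this
      · right
        rw [← hpart1 bv, ← hswap1]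
        apply Finset.sum_lt_sum hper1
        refine ⟨i0, hmem1 i0 h, ?_⟩
        have := hst
        rwa [hv1 i0 h] at this
    have hmul : r * (∑ z' ∈ Pᶜ, bv z') ≤ r * ∑ j : Fin m, bv j * (1 - z j) :=
      mul_le_mul_of_nonneg_left hagg1 hr.le
    rcases hstrict with h | h
    · nlinarith
    · nlinarith

end Stmt19

/-- With at most two distinct valuation types and `m = n·k`, there exists a
balanced allocation that is both EF1 and fPO. -/
theorem stmt19 (n m k : ℕ) (hn : 0 < n) (hm : m = n * k)
    (t : Fin n → Fin 2) (u : Fin 2 → Fin m → ℝ) (hu : ∀ s j, 0 ≤ u s j)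
    (v : Fin n → Fin m → ℝ) (hv : ∀ i, v i = u (t i)) :
    ∃ A : Fin n → Finset (Fin m),
      IsBalanced n m k A ∧ IsEF1 n m v A ∧ IsFPO n m k v A := by
  classical
  rcases Nat.eq_zero_or_pos k with rfl | hk
  · -- k = 0 : m = 0, empty allocation
    have hm0 : m = 0 := by omega
    haveI : IsEmpty (Fin m) := by rw [hm0]; infer_instance
    refine ⟨fun _ => ∅, ⟨fun j => isEmptyElim j, fun i => rfl⟩, fun i i' => Or.inl rfl, ?_⟩
    rintro ⟨x, _, _, i0, hst⟩
    rw [Finset.sum_empty, Finset.univ_eq_empty, Finset.sum_empty] at hst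
    exact lt_irrefl _ hst
  · have hm0 : 0 < m := by rw [hm]; exact Nat.mul_pos hn hk
    set d : Fin m := ⟨0, hm0⟩ with hd
    have ht01 : ∀ i, t i = 0 ∨ t i = 1 := by
      intro i
      have h := (t i).isLt
      have h' : (t i).val = 0 ∨ (t i).val = 1 := by omega
      rcases h' with h' | h'
      · exact Or.inl (Fin.ext h')
      · exact Or.inr (Fin.ext h')
    set T0 := Finset.univ.filter (fun i : Fin n => t i = 0) with hT0
    set T1 := Finset.univ.filter (fun i : Fin n => ¬ t i = 0) with hT1
    rcases Nat.eq_zero_or_pos T0.card with h1 | h1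
    · -- everyone has type 1
      have hall1 : ∀ i, v i = u 1 := by
        intro i
        rcases ht01 i with h | h
        · exfalso
          have : i ∈ T0 := Finset.mem_filter.2 ⟨Finset.mem_univ i, h⟩
          rw [Finset.card_eq_zero.1 h1] at this
          exact absurd this (Finset.notMem_empty i)
        · rw [hv, h]
      obtain ⟨A, hb1, hb2, hef, hsum⟩ :=
        Stmt19.single_allocation hn hk hm d (u 1) (hu 1)
      refine ⟨A, ⟨hb1, hb2⟩, ?_, ?_⟩
      · intro i i'
        right
        rw [hall1 i]
        exact hef i i'
      · rintro ⟨x, ⟨hx0, hrow, hcol⟩, hall, i0, hst⟩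
        have hle : ∀ i : Fin n, ∑ z ∈ A i, u 1 z ≤ ∑ j : Fin m, u 1 j * x i j := by
          intro i
          have h := hall i
          rwa [hall1 i] at h
        have hlt2 : ∑ z ∈ A i0, u 1 z < ∑ j : Fin m, u 1 j * x i0 j := by
          have h := hst
          rwa [hall1 i0] at h
        have hlt : ∑ i : Fin n, ∑ z ∈ A i, u 1 z
            < ∑ i : Fin n, ∑ j : Fin m, u 1 j * x i j :=
          Finset.sum_lt_sum (fun i _ => hle i) ⟨i0, Finset.mem_univ _, hlt2⟩
        have hL := hsum (u 1)
        have hR : ∑ i : Fin n, ∑ j : Fin m, u 1 j * x i j = ∑ j : Fin m, u 1 j := by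
          rw [Finset.sum_comm]
          apply Finset.sum_congr rfl
          intro j _
          rw [← Finset.mul_sum, hcol j, mul_one]
        rw [hL, hR] at hlt
        exact lt_irrefl _ hlt
    rcases Nat.eq_zero_or_pos T1.card with h2 | h2
    · -- everyone has type 0
      have hall0 : ∀ i, v i = u 0 := by
        intro i
        by_cases h : t i = 0
        · rw [hv, h]
        · exfalso
          have : i ∈ T1 := Finset.mem_filter.2 ⟨Finset.mem_univ i, h⟩
          rw [Finset.card_eq_zero.1 h2] at this
          exact absurd this (Finset.notMem_empty i)
      obtain ⟨A, hb1, hb2, hef, hsum⟩ :=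
        Stmt19.single_allocation hn hk hm d (u 0) (hu 0)
      refine ⟨A, ⟨hb1, hb2⟩, ?_, ?_⟩
      · intro i i'
        right
        rw [hall0 i]
        exact hef i i'
      · rintro ⟨x, ⟨hx0, hrow, hcol⟩, hall, i0, hst⟩
        have hle : ∀ i : Fin n, ∑ z ∈ A i, u 0 z ≤ ∑ j : Fin m, u 0 j * x i j := by
          intro i
          have h := hall i
          rwa [hall0 i] at h
        have hlt2 : ∑ z ∈ A i0, u 0 z < ∑ j : Fin m, u 0 j * x i0 j := by
          have h := hst
          rwa [hall0 i0] at h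
        have hlt : ∑ i : Fin n, ∑ z ∈ A i, u 0 z
            < ∑ i : Fin n, ∑ j : Fin m, u 0 j * x i j :=
          Finset.sum_lt_sum (fun i _ => hle i) ⟨i0, Finset.mem_univ _, hlt2⟩
        have hL := hsum (u 0)
        have hR : ∑ i : Fin n, ∑ j : Fin m, u 0 j * x i j = ∑ j : Fin m, u 0 j := by
          rw [Finset.sum_comm]
          apply Finset.sum_congr rfl
          intro j _
          rw [← Finset.mul_sum, hcol j, mul_one]
        rw [hL, hR] at hlt
        exact lt_irrefl _ hlt
    · -- two nonempty types
      apply Stmt19.two_type_allocation hn hk hm t (u 0) (u 1) (hu 0) (hu 1) v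
        (fun i h => by rw [hv, h]) ?_ d h1 h2
      intro i h
      rcases ht01 i with h' | h'
      · exact absurd h' h
      · rw [hv, h']
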